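/- The partition of standard Young tableaux of shape λ induced by destandardization refines by number of runs: a standard Young tableau T corresponds to an element of QYT_{=m}(λ) if and only if T has exactly m runs, i.e., |Des(T)| = m−1. -/

import Mathlib

open YoungDiagram

/-- Entries of `T` are all `< m`.  Entries are 0-based: the value `v` represents the
positive integer `v + 1`, so this says all (1-based) entries are at most `m`. -/
def EntryLE (μ : YoungDiagram) (T : SemistandardYoungTableau μ) (m : ℕ) : Prop :=
  ∀ i j : ℕ, (i, j) ∈ μ → T i j < m

/-- `T` is quasi-Yamanouchi: whenever a value `v > 0` appears, the leftmost
occurrence of `v` is weakly left of some occurrence of `v - 1`; equivalently some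
occurrence of `v` is weakly left of some occurrence of `v - 1`. -/
def IsQY (μ : YoungDiagram) (T : SemistandardYoungTableau μ) : Prop :=
  ∀ v : ℕ, 0 < v → (∃ i j : ℕ, (i, j) ∈ μ ∧ T i j = v) →
    ∃ i j i' j' : ℕ, (i, j) ∈ μ ∧ (i', j') ∈ μ ∧ T i j = v ∧ T i' j' = v - 1 ∧ j ≤ j'

/-- The maximum (1-based) entry of `T` is exactly `m`: all entries are `< m`
(0-based) and the value `m - 1` appears. -/
def MaxEq (μ : YoungDiagram) (T : SemistandardYoungTableau μ) (m : ℕ) : Prop :=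
  EntryLE μ T m ∧ ∃ i j : ℕ, (i, j) ∈ μ ∧ T i j = m - 1

/-- The number of quasi-Yamanouchi tableaux of shape `μ` with maximum entry exactly `m`. -/
noncomputable def QYTeq (μ : YoungDiagram) (m : ℕ) : ℕ :=
  Nat.card {T : SemistandardYoungTableau μ // IsQY μ T ∧ MaxEq μ T m}

/-- The number of semistandard Young tableaux of shape `μ` with entries at most `m`. -/
noncomputable def SSYTle (μ : YoungDiagram) (m : ℕ) : ℕ :=
  Nat.card {T : SemistandardYoungTableau μ // EntryLE μ T m}

/-- `T` is a standard Young tableau: each of the values `0, …, μ.card - 1`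
(representing `1, …, n`) appears exactly once. -/
def IsSYT (μ : YoungDiagram) (T : SemistandardYoungTableau μ) : Prop :=
  ∀ v : ℕ, v < μ.card → ∃! p : ℕ × ℕ, p ∈ μ ∧ T p.1 p.2 = v

/-- The number of standard Young tableaux of shape `μ`. -/
noncomputable def SYTcount (μ : YoungDiagram) : ℕ :=
  Nat.card {T : SemistandardYoungTableau μ // IsSYT μ T}

/-- The descent set of a standard tableau, in the paper's 1-based labelling:
`d ∈ Des T` iff `1 ≤ d ≤ n - 1` and the (1-based) entry `d + 1` (0-based value `d`)
appears weakly left of the (1-based) entry `d` (0-based value `d - 1`). -/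
def Des (μ : YoungDiagram) (T : SemistandardYoungTableau μ) : Set ℕ :=
  {d | 1 ≤ d ∧ d ≤ μ.card - 1 ∧
    ∃ i j i' j' : ℕ, (i, j) ∈ μ ∧ (i', j') ∈ μ ∧ T i j = d ∧ T i' j' = d - 1 ∧ j ≤ j'}

/-- One destandardization step at value `v`: every occurrence of `v` lies strictly
right of every occurrence of `v - 1` (in particular vacuously if no `v - 1` appears),
and `T'` is obtained from `T` by decrementing every entry equal to `v` to `v - 1`. -/
def StepAt (μ : YoungDiagram) (T T' : SemistandardYoungTableau μ) (v : ℕ) : Prop :=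
  0 < v ∧ (∃ i j : ℕ, (i, j) ∈ μ ∧ T i j = v) ∧
    (∀ i j i' j' : ℕ, (i, j) ∈ μ → (i', j') ∈ μ → T i j = v → T i' j' = v - 1 → j' < j) ∧
    (∀ i j : ℕ, (i, j) ∈ μ → T' i j = if T i j = v then v - 1 else T i j)

/-- One destandardization step (at some value). -/
def Step (μ : YoungDiagram) (T T' : SemistandardYoungTableau μ) : Prop :=
  ∃ v : ℕ, StepAt μ T T' v

/-- `Q` is the destandardization of `T`: it is reachable from `T` by destandardization
steps and no further step applies to it. -/
def IsDst (μ : YoungDiagram) (T Q : SemistandardYoungTableau μ) : Prop :=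
  Relation.ReflTransGen (Step μ) T Q ∧ ∀ Q' : SemistandardYoungTableau μ, ¬ Step μ Q Q'

/-- The hook length of the box in row `i`, column `j` of `μ`. -/
def hookLength (μ : YoungDiagram) (i j : ℕ) : ℕ :=
  (μ.rowLen i - j) + (μ.colLen j - i) - 1

/-- The hook-content product `∏_{u ∈ μ} (k + c(u)) / h(u)` where `c(u)` is the
content (column minus row) and `h(u)` the hook length. -/
noncomputable def hookContent (μ : YoungDiagram) (k : ℕ) : ℚ :=
  ∏ c ∈ μ.cells, ((k : ℚ) + (c.2 : ℚ) - (c.1 : ℚ)) / (hookLength μ c.1 c.2 : ℚ)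

/-- `μ` is the partition `(l1, l2, 2^{h2-2}, 1^{h1-h2})`: first row `l1`, second row
`l2`, rows `2, …, h2 - 1` of length `2`, rows `h2, …, h1 - 1` of length `1`, and no
other rows; so the first column has height `h1` and the second column height `h2`. -/
def HasRows2 (μ : YoungDiagram) (l1 l2 h1 h2 : ℕ) : Prop :=
  μ.rowLen 0 = l1 ∧ μ.rowLen 1 = l2 ∧
    (∀ i : ℕ, 2 ≤ i → i < h2 → μ.rowLen i = 2) ∧
    (∀ i : ℕ, h2 ≤ i → i < h1 → μ.rowLen i = 1) ∧
    (∀ i : ℕ, h1 ≤ i → μ.rowLen i = 0)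

namespace DstAux

variable {μ : YoungDiagram}

/-- value `v` appears in `S`. -/
def Ap (μ : YoungDiagram) (S : SemistandardYoungTableau μ) (v : ℕ) : Prop :=
  ∃ i j : ℕ, (i, j) ∈ μ ∧ S i j = v

/-- "descent boundaries": values `w` whose predecessor class `u` is not strictly left. -/
def DS (μ : YoungDiagram) (S : SemistandardYoungTableau μ) : Set ℕ :=
  {w | 0 < w ∧ Ap μ S w ∧ ∃ u, u < w ∧ Ap μ S u ∧
    (∀ z, u < z → z < w → ¬ Ap μ S z) ∧
    ∃ i j i' j' : ℕ, (i, j) ∈ μ ∧ (i', j') ∈ μ ∧ S i j = w ∧ S i' j' = u ∧ j ≤ j'}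

/-- the decremented tableau. -/
def decTab (S : SemistandardYoungTableau μ) (v : ℕ) (hv : 0 < v)
    (hcond : ∀ i j i' j' : ℕ, (i, j) ∈ μ → (i', j') ∈ μ → S i j = v → S i' j' = v - 1 → j' < j) :
    SemistandardYoungTableau μ where
  entry i j := if (i, j) ∈ μ.cells ∧ S i j = v then v - 1 else S i j
  row_weak' := by
    intro i j1 j2 hj h2
    have h1 : (i, j1) ∈ μ := μ.up_left_mem le_rfl hj.le h2
    have hab : S i j1 ≤ S i j2 := S.row_weak hj h2
    split_ifs with ha hb hb
    · exact le_rfl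
    · have := ha.2; omega
    · have hne : S i j1 ≠ v := fun hh => ha ⟨(mem_cells _).mpr h1, hh⟩
      have := hb.2; omega
    · exact hab
  col_strict' := by
    intro i1 i2 j hi h2
    have h1 : (i1, j) ∈ μ := μ.up_left_mem hi.le le_rfl h2
    have hab : S i1 j < S i2 j := S.col_strict hi h2
    split_ifs with ha hb hb
    · have := ha.2; have := hb.2; omega
    · have := ha.2; omega
    · have hne : S i1 j ≠ v := fun hh => ha ⟨(mem_cells _).mpr h1, hh⟩
      have hne' : S i1 j ≠ v - 1 := fun hh => absurd (hcond i2 j i1 j h2 h1 hb.2 hh) (lt_irrefl j)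
      have := hb.2; omega
    · exact hab
  zeros' := by
    intro i j hij
    rw [if_neg, S.zeros hij]
    rintro ⟨hmem, -⟩
    exact hij ((mem_cells _).mp hmem)

lemma step_decTab (S : SemistandardYoungTableau μ) (v : ℕ) (hv : 0 < v) (hap : Ap μ S v)
    (hcond : ∀ i j i' j' : ℕ, (i, j) ∈ μ → (i', j') ∈ μ → S i j = v → S i' j' = v - 1 → j' < j) :
    Step μ S (decTab S v hv hcond) := by
  refine ⟨v, hv, hap, hcond, ?_⟩
  intro i j hm
  show (if (i, j) ∈ μ.cells ∧ S i j = v then v - 1 else S i j) = _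
  by_cases hsv : S i j = v
  · rw [if_pos ⟨(mem_cells _).mpr hm, hsv⟩, if_pos hsv]
  · rw [if_neg (fun hh => hsv hh.2), if_neg hsv]


section StepFacts

variable {S S' : SemistandardYoungTableau μ} {v : ℕ}

lemma e1 (h : StepAt μ S S' v) {i j : ℕ} (hm : (i, j) ∈ μ) (hs : S i j = v) :
    S' i j = v - 1 := by
  rw [h.2.2.2 i j hm, if_pos hs]

lemma e2 (h : StepAt μ S S' v) {i j : ℕ} (hm : (i, j) ∈ μ) (hs : S i j ≠ v) :
    S' i j = S i j := by
  rw [h.2.2.2 i j hm, if_neg hs]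

lemma e3 (h : StepAt μ S S' v) {i j w : ℕ} (hm : (i, j) ∈ μ) (hs : S' i j = w) :
    (S i j = w ∧ w ≠ v) ∨ (S i j = v ∧ w = v - 1) := by
  rw [h.2.2.2 i j hm] at hs
  by_cases hv : S i j = v
  · right; rw [if_pos hv] at hs; exact ⟨hv, hs.symm⟩
  · left; rw [if_neg hv] at hs; exact ⟨hs, fun hw => hv (hw ▸ hs)⟩

lemma ap_not_v (h : StepAt μ S S' v) : ¬ Ap μ S' v := by
  rintro ⟨i, j, hm, hs⟩
  have hv := h.1
  rcases e3 h hm hs with ⟨-, hne⟩ | ⟨-, hne⟩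
  · exact hne rfl
  · omega

lemma ap'_iff (h : StepAt μ S S' v) (w : ℕ) :
    Ap μ S' w ↔ (w ≠ v ∧ Ap μ S w) ∨ w = v - 1 := by
  constructor
  · rintro ⟨i, j, hm, hs⟩
    rcases e3 h hm hs with ⟨hsw, hne⟩ | ⟨-, hw⟩
    · exact Or.inl ⟨hne, i, j, hm, hsw⟩
    · exact Or.inr hw
  · rintro (⟨hne, i, j, hm, hs⟩ | hw)
    · exact ⟨i, j, hm, by rw [e2 h hm (hs ▸ hne), hs]⟩
    · obtain ⟨i, j, hm, hs⟩ := h.2.1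
      exact ⟨i, j, hm, by rw [e1 h hm hs, hw]⟩

lemma v_notmem_DS (h : StepAt μ S S' v) (hp : Ap μ S (v - 1)) : v ∉ DS μ S := by
  rintro ⟨hv0, -, u, hu, hapu, hbtw, i, j, i', j', hm, hm', hSw, hSu, hjj⟩
  by_cases huv : u = v - 1
  · subst huv
    exact absurd (h.2.2.1 i j i' j' hm hm' hSw hSu) (by omega)
  · exact hbtw (v - 1) (by omega) (by omega) hp

end StepFacts


section Invariance

variable {S S' : SemistandardYoungTableau μ} {v : ℕ}

lemma DS_stepAt_of_pred (h : StepAt μ S S' v) (hp : Ap μ S (v - 1)) :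
    DS μ S' = DS μ S := by
  have hv := h.1
  have hap := h.2.1
  have hcond := h.2.2.1
  ext w
  constructor
  · rintro ⟨hw0, hapw', u, hult, hapu', hbtw', i, j, i', j', hm, hm', hSw', hSu', hjj⟩
    have hwv : w ≠ v := fun hh => ap_not_v h (hh ▸ hapw')
    have huv : u ≠ v := fun hh => ap_not_v h (hh ▸ hapu')
    have hapw : Ap μ S w := by
      rcases (ap'_iff h w).mp hapw' with ⟨-, hw⟩ | hw
      · exact hw
      · exact hw ▸ hp
    have hapu : Ap μ S u := by
      rcases (ap'_iff h u).mp hapu' with ⟨-, hu⟩ | hu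
      · exact hu
      · exact hu ▸ hp
    by_cases hc : u = v - 1 ∧ v < w
    · obtain ⟨hu1, hvw⟩ := hc
      refine ⟨hw0, hapw, v, hvw, hap, ?_, ?_⟩
      · intro z hz1 hz2 hz
        exact hbtw' z (by omega) hz2 ((ap'_iff h z).mpr (Or.inl ⟨by omega, hz⟩))
      · rcases e3 h hm hSw' with ⟨hSw, -⟩ | ⟨-, hh⟩
        swap
        · omega
        rcases e3 h hm' hSu' with ⟨hSu, -⟩ | ⟨hSu, -⟩
        · obtain ⟨a, b, hab, hSab⟩ := hap
          have hjb : j' < b := hcond a b i' j' hab hm' hSab (hu1 ▸ hSu)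
          exact ⟨i, j, a, b, hm, hab, hSw, hSab, by omega⟩
        · exact ⟨i, j, i', j', hm, hm', hSw, hSu, hjj⟩
    · have hu1 : u ≠ v - 1 := fun hh => hc ⟨hh, by omega⟩
      refine ⟨hw0, hapw, u, hult, hapu, ?_, ?_⟩
      · intro z hz1 hz2 hz
        by_cases hzv : z = v
        · exact hbtw' (v - 1) (by omega) (by omega) ((ap'_iff h _).mpr (Or.inr rfl))
        · exact hbtw' z hz1 hz2 ((ap'_iff h z).mpr (Or.inl ⟨hzv, hz⟩))
      · rcases e3 h hm' hSu' with ⟨hSu, -⟩ | ⟨-, hh⟩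
        swap
        · exact absurd hh hu1
        rcases e3 h hm hSw' with ⟨hSw, -⟩ | ⟨hSv, hw1⟩
        · exact ⟨i, j, i', j', hm, hm', hSw, hSu, hjj⟩
        · obtain ⟨a, b, hab, hSab⟩ := hp
          have hb : b < j := hcond i j a b hm hab hSv hSab
          exact ⟨a, b, i', j', hab, hm', hw1 ▸ hSab, hSu, by omega⟩
  · intro hwDS
    have hwv : w ≠ v := fun hh => v_notmem_DS h hp (hh ▸ hwDS)
    obtain ⟨hw0, hapw, u, hult, hapu, hbtw, i, j, i', j', hm, hm', hSw, hSu, hjj⟩ := hwDS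
    have hapw' : Ap μ S' w := (ap'_iff h w).mpr (Or.inl ⟨hwv, hapw⟩)
    by_cases huv : u = v
    · refine ⟨hw0, hapw', v - 1, by omega, (ap'_iff h _).mpr (Or.inr rfl), ?_, ?_⟩
      · intro z hz1 hz2 hz'
        by_cases hzv : z = v
        · exact ap_not_v h (hzv ▸ hz')
        · rcases (ap'_iff h z).mp hz' with ⟨-, hz⟩ | hz
          · exact hbtw z (by omega) hz2 hz
          · omega
      · exact ⟨i, j, i', j', hm, hm',
          by rw [e2 h hm (show S i j ≠ v by rw [hSw]; exact hwv), hSw],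
          e1 h hm' (hSu.trans huv), hjj⟩
    · have hu1 : u ≠ v - 1 := fun hh => hbtw v (by omega) (by omega) hap
      refine ⟨hw0, hapw', u, hult, (ap'_iff h u).mpr (Or.inl ⟨huv, hapu⟩), ?_, ?_⟩
      · intro z hz1 hz2 hz'
        rcases (ap'_iff h z).mp hz' with ⟨-, hz⟩ | hz
        · exact hbtw z hz1 hz2 hz
        · subst hz
          exact hbtw v (by omega) (by omega) hap
      · exact ⟨i, j, i', j', hm, hm',
          by rw [e2 h hm (show S i j ≠ v by rw [hSw]; exact hwv), hSw],
          by rw [e2 h hm' (show S i' j' ≠ v by rw [hSu]; exact huv), hSu], hjj⟩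

end Invariance


section InvarianceA

variable {S S' : SemistandardYoungTableau μ} {v : ℕ}

lemma DS_stepAt_of_not_pred (h : StepAt μ S S' v) (hp : ¬ Ap μ S (v - 1)) :
    DS μ S' = (fun w => if w = v then v - 1 else w) '' DS μ S := by
  have hv := h.1
  have hap := h.2.1
  ext x
  constructor
  · rintro ⟨hw0, hapw', u, hult, hapu', hbtw', i, j, i', j', hm, hm', hSw', hSu', hjj⟩
    have hwv : x ≠ v := fun hh => ap_not_v h (hh ▸ hapw')
    have huv : u ≠ v := fun hh => ap_not_v h (hh ▸ hapu')
    by_cases hx1 : x = v - 1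
    · -- preimage is v
      have hu1 : u ≠ v - 1 := by omega
      have hapu : Ap μ S u := by
        rcases (ap'_iff h u).mp hapu' with ⟨-, hu⟩ | hu
        · exact hu
        · exact absurd hu hu1
      refine ⟨v, ⟨hv, hap, u, by omega, hapu, ?_, ?_⟩, by simp [hx1]⟩
      · intro z hz1 hz2 hz
        by_cases hz3 : z = v - 1
        · exact hp (hz3 ▸ hz)
        · exact hbtw' z hz1 (by omega) ((ap'_iff h z).mpr (Or.inl ⟨by omega, hz⟩))
      · rcases e3 h hm hSw' with ⟨hSw, -⟩ | ⟨hSv, -⟩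
        · exact absurd ⟨i, j, hm, hx1 ▸ hSw⟩ hp
        rcases e3 h hm' hSu' with ⟨hSu, -⟩ | ⟨-, hh⟩
        · exact ⟨i, j, i', j', hm, hm', hSv, hSu, hjj⟩
        · exact absurd hh hu1
    · -- preimage is x itself
      have hapw : Ap μ S x := by
        rcases (ap'_iff h x).mp hapw' with ⟨-, hw⟩ | hw
        · exact hw
        · exact absurd hw hx1
      by_cases hu1 : u = v - 1
      · -- new predecessor is v
        have hvw : v < x := by omega
        refine ⟨x, ⟨hw0, hapw, v, hvw, hap, ?_, ?_⟩, by simp [hwv]⟩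
        · intro z hz1 hz2 hz
          exact hbtw' z (by omega) hz2 ((ap'_iff h z).mpr (Or.inl ⟨by omega, hz⟩))
        · rcases e3 h hm hSw' with ⟨hSw, -⟩ | ⟨-, hh⟩
          swap
          · exact absurd hh hx1
          rcases e3 h hm' hSu' with ⟨hSu, -⟩ | ⟨hSv, -⟩
          · exact absurd ⟨i', j', hm', hu1 ▸ hSu⟩ hp
          · exact ⟨i, j, i', j', hm, hm', hSw, hSv, hjj⟩
      · refine ⟨x, ⟨hw0, hapw, u, hult, ?_, ?_, ?_⟩, by simp [hwv]⟩
        · rcases (ap'_iff h u).mp hapu' with ⟨-, hu⟩ | hu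
          · exact hu
          · exact absurd hu hu1
        · intro z hz1 hz2 hz
          by_cases hzv : z = v
          · exact hbtw' (v - 1) (by omega) (by omega) ((ap'_iff h _).mpr (Or.inr rfl))
          · exact hbtw' z hz1 hz2 ((ap'_iff h z).mpr (Or.inl ⟨hzv, hz⟩))
        · rcases e3 h hm hSw' with ⟨hSw, -⟩ | ⟨-, hh⟩
          swap
          · exact absurd hh hx1
          rcases e3 h hm' hSu' with ⟨hSu, -⟩ | ⟨-, hh⟩
          swap
          · exact absurd hh hu1
          exact ⟨i, j, i', j', hm, hm', hSw, hSu, hjj⟩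
  · rintro ⟨w, ⟨hw0, hapw, u, hult, hapu, hbtw, i, j, i', j', hm, hm', hSw, hSu, hjj⟩, hfw⟩
    have huv1 : u ≠ v - 1 := fun hh => hp (hh ▸ hapu)
    by_cases hwv : w = v
    · have hx : x = v - 1 := by rw [← hfw]; simp [hwv]
      subst hx
      rw [hwv] at hult hbtw hSw
      have hu1 : u < v - 1 := by omega
      refine ⟨by omega, (ap'_iff h _).mpr (Or.inr rfl), u, hu1,
        (ap'_iff h u).mpr (Or.inl ⟨by omega, hapu⟩), ?_, ?_⟩
      · intro z hz1 hz2 hz'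
        rcases (ap'_iff h z).mp hz' with ⟨-, hz⟩ | hz
        · exact hbtw z hz1 (by omega) hz
        · omega
      · refine ⟨i, j, i', j', hm, hm', e1 h hm hSw, ?_, hjj⟩
        rw [e2 h hm' (show S i' j' ≠ v by rw [hSu]; omega), hSu]
    · have hw1 : w ≠ v - 1 := fun hh => hp (hh ▸ hapw)
      simp only [if_neg hwv] at hfw
      subst hfw
      have hapw' : Ap μ S' w := (ap'_iff h w).mpr (Or.inl ⟨hwv, hapw⟩)
      by_cases huv : u = v
      · refine ⟨hw0, hapw', v - 1, by omega, (ap'_iff h _).mpr (Or.inr rfl), ?_, ?_⟩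
        · intro z hz1 hz2 hz'
          rcases (ap'_iff h z).mp hz' with ⟨hzv, hz⟩ | hz
          · exact hbtw z (by omega) hz2 hz
          · omega
        · exact ⟨i, j, i', j', hm, hm',
            by rw [e2 h hm (show S i j ≠ v by rw [hSw]; exact hwv), hSw],
            e1 h hm' (hSu.trans huv), hjj⟩
      · refine ⟨hw0, hapw', u, hult, (ap'_iff h u).mpr (Or.inl ⟨huv, hapu⟩), ?_, ?_⟩
        · intro z hz1 hz2 hz'
          rcases (ap'_iff h z).mp hz' with ⟨hzv, hz⟩ | hz
          · exact hbtw z hz1 hz2 hz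
          · have hnot : ¬ (u < v ∧ v < w) := fun hh => hbtw v hh.1 hh.2 hap
            omega
        · exact ⟨i, j, i', j', hm, hm',
            by rw [e2 h hm (show S i j ≠ v by rw [hSw]; exact hwv), hSw],
            by rw [e2 h hm' (show S i' j' ≠ v by rw [hSu]; exact huv), hSu], hjj⟩

lemma injOn_relabel (h : StepAt μ S S' v) (hp : ¬ Ap μ S (v - 1)) :
    Set.InjOn (fun w => if w = v then v - 1 else w) (DS μ S) := by
  intro a ha b hb hab
  dsimp only at hab
  split_ifs at hab with h1 h2 h2
  · omega
  · exact absurd hb.2.1 (hab ▸ hp)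
  · exact absurd ha.2.1 (hab ▸ hp)
  · exact hab

lemma ncard_DS_step (hS : Step μ S S') : (DS μ S').ncard = (DS μ S).ncard := by
  obtain ⟨v, h⟩ := hS
  by_cases hp : Ap μ S (v - 1)
  · rw [DS_stepAt_of_pred h hp]
  · rw [DS_stepAt_of_not_pred h hp, Set.ncard_image_of_injOn (injOn_relabel h hp)]

lemma ncard_DS_rtg {T Q : SemistandardYoungTableau μ}
    (h : Relation.ReflTransGen (Step μ) T Q) : (DS μ Q).ncard = (DS μ T).ncard := by
  induction h with
  | refl => rfl
  | tail _ hstep ih => rw [ncard_DS_step hstep, ih]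

end InvarianceA


section Terminal

variable {Q : SemistandardYoungTableau μ}

lemma terminal_not_cond (hterm : ∀ Q', ¬ Step μ Q Q') {v : ℕ} (hv : 0 < v) (hap : Ap μ Q v)
    (hcond : ∀ i j i' j' : ℕ, (i, j) ∈ μ → (i', j') ∈ μ → Q i j = v → Q i' j' = v - 1 → j' < j) :
    False :=
  hterm _ (step_decTab Q v hv hap hcond)

lemma terminal_qy (hterm : ∀ Q', ¬ Step μ Q Q') : IsQY μ Q := by
  intro v hv hap
  by_contra hno
  push_neg at hno
  refine terminal_not_cond hterm hv hap ?_
  intro i j i' j' hm hm' h1 h2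
  exact hno i j i' j' hm hm' h1 h2

lemma terminal_down (hterm : ∀ Q', ¬ Step μ Q Q') {v : ℕ} (hv : 0 < v) (hap : Ap μ Q v) :
    Ap μ Q (v - 1) := by
  by_contra hno
  refine terminal_not_cond hterm hv hap ?_
  intro i j i' j' hm hm' h1 h2
  exact absurd ⟨i', j', hm', h2⟩ hno

lemma terminal_down_all (hterm : ∀ Q', ¬ Step μ Q Q') {v w : ℕ} (hw : w ≤ v)
    (hap : Ap μ Q v) : Ap μ Q w := by
  induction v with
  | zero => exact (Nat.le_zero.mp hw) ▸ hap
  | succ n ih =>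
    rcases Nat.eq_or_lt_of_le hw with rfl | hlt
    · exact hap
    · have := terminal_down hterm (Nat.succ_pos n) hap
      change Ap μ Q n at this
      exact ih (by omega) this

lemma terminal_structure (hμ : 0 < μ.card) (hterm : ∀ Q', ¬ Step μ Q Q') :
    ∃ M : ℕ, (DS μ Q).ncard = M ∧ ∀ m : ℕ, MaxEq μ Q m ↔ m = M + 1 := by
  classical
  set V : Finset ℕ := μ.cells.image (fun c => Q c.1 c.2) with hV
  have mem_V : ∀ w, w ∈ V ↔ Ap μ Q w := by
    intro w
    constructor
    · intro hw
      obtain ⟨⟨i, j⟩, hc, e⟩ := Finset.mem_image.mp hw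
      exact ⟨i, j, (mem_cells _).mp hc, e⟩
    · rintro ⟨i, j, hm, e⟩
      exact Finset.mem_image.mpr ⟨(i, j), (mem_cells _).mpr hm, e⟩
  have hVne : V.Nonempty := Finset.Nonempty.image (Finset.card_pos.mp hμ) _
  set M := V.max' hVne with hM
  have hMV : Ap μ Q M := (mem_V M).mp (V.max'_mem hVne)
  have hdown : ∀ w, w ≤ M → Ap μ Q w := fun w hw => terminal_down_all hterm hw hMV
  have hle : ∀ w, Ap μ Q w → w ≤ M := fun w hw => V.le_max' w ((mem_V w).mpr hw)
  refine ⟨M, ?_, ?_⟩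
  · have : DS μ Q = Set.Ioc 0 M := by
      ext w
      constructor
      · rintro ⟨hw0, hapw, -⟩
        exact ⟨hw0, hle w hapw⟩
      · rintro ⟨hw0, hwM⟩
        refine ⟨hw0, hdown w hwM, w - 1, by omega, hdown (w - 1) (by omega), ?_, ?_⟩
        · intro z hz1 hz2
          omega
        · exact terminal_qy hterm w hw0 (hdown w hwM)
    rw [this, ← Finset.coe_Ioc, Set.ncard_coe_finset, Nat.card_Ioc]
    omega
  · intro m
    constructor
    · rintro ⟨hEntry, i, j, hm, he⟩
      have h1 : m - 1 ≤ M := hle _ ⟨i, j, hm, he⟩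
      obtain ⟨a, b, hab, hQab⟩ := hMV
      have h2 : M < m := hQab ▸ hEntry a b hab
      omega
    · rintro rfl
      refine ⟨fun i j hm => ?_, ?_⟩
      · have : Q i j ≤ M := hle _ ⟨i, j, hm, rfl⟩
        omega
      · obtain ⟨a, b, hab, hQab⟩ := hMV
        exact ⟨a, b, hab, by omega⟩

end Terminal


section SYT

variable {T : SemistandardYoungTableau μ}

lemma syt_ap_iff (hμ : 0 < μ.card) (hT : IsSYT μ T) (v : ℕ) :
    Ap μ T v ↔ v < μ.card := by
  constructor
  · rintro ⟨i, j, hm, he⟩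
    by_contra hge
    push_neg at hge
    have hex : ∀ w : Fin μ.card, ∃ p : ℕ × ℕ, p ∈ μ ∧ T p.1 p.2 = (w : ℕ) := fun w =>
      (hT w w.2).exists
    choose F hF1 hF2 using hex
    have hinj : Function.Injective F := by
      intro a b hab
      exact Fin.ext (by rw [← hF2 a, ← hF2 b, hab])
    have hFmem : ∀ w, F w ∈ μ.cells := fun w => (mem_cells _).mpr (hF1 w)
    have hGinj : Function.Injective (fun w => (⟨F w, hFmem w⟩ : {c // c ∈ μ.cells})) :=
      fun a b hab => hinj (congrArg Subtype.val hab)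
    have hcard : Fintype.card (Fin μ.card) = Fintype.card {c // c ∈ μ.cells} := by
      simp [Fintype.card_coe]
    have hGsurj := ((Fintype.bijective_iff_injective_and_card _).mpr ⟨hGinj, hcard⟩).2
    obtain ⟨w, hw⟩ := hGsurj ⟨(i, j), (mem_cells _).mpr hm⟩
    have hFw : F w = (i, j) := congrArg Subtype.val hw
    have : T i j = (w : ℕ) := by rw [← hF2 w, hFw]
    have := w.2
    omega
  · intro hv
    obtain ⟨p, ⟨hp, he⟩, -⟩ := hT v hv
    exact ⟨p.1, p.2, hp, he⟩

lemma syt_DS_eq_Des (hμ : 0 < μ.card) (hT : IsSYT μ T) : DS μ T = Des μ T := by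
  ext d
  constructor
  · rintro ⟨hd0, hapd, u, hud, hapu, hbtw, i, j, i', j', hm, hm', h1, h2, hjj⟩
    have hdlt : d < μ.card := (syt_ap_iff hμ hT d).mp hapd
    have hu : u = d - 1 := by
      by_contra hne
      exact hbtw (d - 1) (by omega) (by omega) ((syt_ap_iff hμ hT _).mpr (by omega))
    exact ⟨hd0, by omega, i, j, i', j', hm, hm', h1, hu ▸ h2, hjj⟩
  · rintro ⟨hd1, hd2, i, j, i', j', hm, hm', h1, h2, hjj⟩
    have hdlt : d < μ.card := by omega
    refine ⟨hd1, (syt_ap_iff hμ hT d).mpr hdlt, d - 1, by omega,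
      (syt_ap_iff hμ hT _).mpr (by omega), ?_, i, j, i', j', hm, hm', h1, h2, hjj⟩
    intro z hz1 hz2 _
    omega

end SYT

end DstAux

/-- a standard Young tableau `T` corresponds (via destandardization)
to an element of `QYT_{=m}(λ)` if and only if `T` has exactly `m` runs, i.e.
`|Des(T)| = m - 1`. -/
theorem dst_maxeq_iff_descents (μ : YoungDiagram) (hμ : 0 < μ.card)
    (T Q : SemistandardYoungTableau μ) (hT : IsSYT μ T) (hdst : IsDst μ T Q)
    (m : ℕ) (hm : 1 ≤ m) :
    (IsQY μ Q ∧ MaxEq μ Q m) ↔ (Des μ T).ncard = m - 1 := by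
  obtain ⟨hrtg, hterm⟩ := hdst
  obtain ⟨M, hMcard, hMiff⟩ := DstAux.terminal_structure hμ hterm
  have hQT : (DstAux.DS μ Q).ncard = (DstAux.DS μ T).ncard := DstAux.ncard_DS_rtg hrtg
  have hDes : (Des μ T).ncard = M := by
    rw [← DstAux.syt_DS_eq_Des hμ hT, ← hQT, hMcard]
  constructor
  · rintro ⟨-, hmax⟩
    have := (hMiff m).mp hmax
    omega
  · intro hcard
    exact ⟨DstAux.terminal_qy hterm, (hMiff m).mpr (by omega)⟩
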